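/- Let n ≥ 2 and let h₁, …, hₙ be positive reals with 0 < h̲ = h₁ ≤ h₂ ≤ ⋯ ≤ hₙ = h̄ < ∞ and h̲ < h̄. Let Aₙ = (1/n)·Σᵢ hᵢ and Gₙ = (Πᵢ hᵢ)^{1/n} be the arithmetic and geometric means, and Dₙ = log Aₙ − log Gₙ. Then Dₙ ≤ −log H + H − 1, where H = h̲·(log h̄ − log h̲)/(h̄ − h̲). -/

import Mathlib

open scoped BigOperators

/-- Upper bound for Dₙ = log Aₙ - log Gₙ of ordered positive reals h₁ ≤ ⋯ ≤ hₙ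
with h̲ = h₁ < hₙ = h̄: Dₙ ≤ -log H + H - 1 with H = h̲(log h̄ - log h̲)/(h̄-h̲). -/
theorem stmt_12 (n : ℕ) (hn : 2 ≤ n) (h : Fin n → ℝ) (hmono : Monotone h)
    (hpos : 0 < h ⟨0, by omega⟩)
    (hlt : h ⟨0, by omega⟩ < h ⟨n - 1, by omega⟩) :
    let hlo : ℝ := h ⟨0, by omega⟩
    let hhi : ℝ := h ⟨n - 1, by omega⟩
    let H : ℝ := hlo * (Real.log hhi - Real.log hlo) / (hhi - hlo)
    Real.log ((∑ i, h i) / n) - (∑ i, Real.log (h i)) / n ≤ -Real.log H + H - 1 := by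
  intro a b H
  haveI : NeZero n := ⟨by omega⟩
  have hn0 : (0:ℝ) < (n:ℝ) := by exact_mod_cast (by omega : 0 < n)
  have ha : 0 < a := hpos
  have hb : 0 < b := lt_trans ha hlt
  have hba : 0 < b - a := sub_pos.mpr hlt
  set s : ℝ := (Real.log b - Real.log a) / (b - a) with hsdef
  have hs0 : 0 < s := div_pos (sub_pos.mpr (Real.log_lt_log ha hlt)) hba
  have hbounds : ∀ i : Fin n, a ≤ h i ∧ h i ≤ b := by
    intro i
    refine ⟨hmono ?_, hmono ?_⟩
    · exact Fin.mk_le_mk.mpr (Nat.zero_le _)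
    · exact Fin.mk_le_mk.mpr (by omega)
  have hchord : ∀ i : Fin n, Real.log a + (h i - a) * s ≤ Real.log (h i) := by
    intro i
    obtain ⟨h1, h2⟩ := hbounds i
    have hlam : (0:ℝ) ≤ (b - h i) / (b - a) := div_nonneg (by linarith) hba.le
    have hmu : (0:ℝ) ≤ (h i - a) / (b - a) := div_nonneg (by linarith) hba.le
    have hsum1 : (b - h i) / (b - a) + (h i - a) / (b - a) = 1 := by
      field_simp; ring
    have key := strictConcaveOn_log_Ioi.concaveOn.2 (Set.mem_Ioi.mpr ha)
      (Set.mem_Ioi.mpr hb) hlam hmu hsum1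
    simp only [smul_eq_mul] at key
    have hx : (b - h i) / (b - a) * a + (h i - a) / (b - a) * b = h i := by
      field_simp; ring
    rw [hx] at key
    have hlhs : (b - h i) / (b - a) * Real.log a + (h i - a) / (b - a) * Real.log b
        = Real.log a + (h i - a) * s := by
      rw [hsdef]; field_simp; ring
    linarith [key, hlhs.symm.le, hlhs.le]
  have hSsum : (n:ℝ) * Real.log a + ((∑ i, h i) - n * a) * s ≤ ∑ i, Real.log (h i) := by
    have h1 := Finset.sum_le_sum (fun i (_ : i ∈ Finset.univ) => hchord i)
    have h2 : ∑ _i : Fin n, (Real.log a + (h _i - a) * s)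
        = (n:ℝ) * Real.log a + ((∑ i, h i) - n * a) * s := by
      rw [Finset.sum_add_distrib, Finset.sum_const, ← Finset.sum_mul,
        Finset.sum_sub_distrib, Finset.sum_const]
      simp [Finset.card_univ]
    linarith [h1, h2.le, h2.symm.le]
  have hS : 0 < ∑ i, h i :=
    Finset.sum_pos (fun i _ => lt_of_lt_of_le ha (hbounds i).1) Finset.univ_nonempty
  set A : ℝ := (∑ i, h i) / n with hAdef
  have hA : 0 < A := div_pos hS hn0
  have hTd : Real.log a + (A - a) * s ≤ (∑ i, Real.log (h i)) / n := by
    have e : (Real.log a + (A - a) * s) * n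
        = (n:ℝ) * Real.log a + ((∑ i, h i) - n * a) * s := by
      rw [hAdef]; field_simp
    rw [le_div_iff₀ hn0, e]; exact hSsum
  have hlog1 : Real.log (s * A) ≤ s * A - 1 := Real.log_le_sub_one_of_pos (mul_pos hs0 hA)
  have hlogmul : Real.log (s * A) = Real.log s + Real.log A := Real.log_mul hs0.ne' hA.ne'
  have hH : H = a * s := mul_div_assoc _ _ _
  have hlogH : Real.log H = Real.log a + Real.log s := by
    rw [hH, Real.log_mul ha.ne' hs0.ne']
  rw [hlogH, hH]
  nlinarith [hTd, hlog1, hlogmul]
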